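/- The real symmetric matrix M = [[1,4,2],[4,3,2],[2,2,3]] is not positive semidefinite; consequently there is no natural number m and no matrix A of size 3×m with nonnegative integer entries such that A * Aᵀ = M. -/

import Mathlib

open Matrix

/-- The real symmetric matrix `M = [[1,4,2],[4,3,2],[2,2,3]]` (the reduced fusion matrix of
`1 + 2ν` in the Haagerup fusion ring `H₄`) is not positive semidefinite; consequently there is
no natural number `m` and no `3 × m` matrix `A` with nonnegative integer entries such that
`A * Aᵀ = M`. -/
theorem stmt_0 :
    ¬ Matrix.PosSemidef (!![(1 : ℝ), 4, 2; 4, 3, 2; 2, 2, 3]) ∧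
    ¬ ∃ (m : ℕ) (A : Matrix (Fin 3) (Fin m) ℤ),
        (∀ i j, 0 ≤ A i j) ∧ A * Aᵀ = !![(1 : ℤ), 4, 2; 4, 3, 2; 2, 2, 3] := by
  constructor
  · intro h
    have := h.dotProduct_mulVec_nonneg ![1, -1, 0]
    simp [Matrix.mulVec, dotProduct, Fin.sum_univ_three] at this
    linarith
  · rintro ⟨m, A, -, hA⟩
    have key : (![1, -1, 0] : Fin 3 → ℤ) ⬝ᵥ (A * Aᵀ) *ᵥ ![1, -1, 0] =
        (Aᵀ *ᵥ ![1, -1, 0]) ⬝ᵥ (Aᵀ *ᵥ ![1, -1, 0]) := by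
      rw [← Matrix.mulVec_mulVec, Matrix.dotProduct_mulVec, ← Matrix.vecMul_transpose]; simp
    have hnn : 0 ≤ (Aᵀ *ᵥ ![1, -1, 0]) ⬝ᵥ (Aᵀ *ᵥ ![1, -1, 0]) :=
      Finset.sum_nonneg fun i _ => mul_self_nonneg _
    rw [← key, hA] at hnn
    simp [Matrix.mulVec, dotProduct, Fin.sum_univ_three] at hnn
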